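/- arXiv:2312.07276 — 3 statements merged into one kernel-verified Lean document; each statement's English description precedes it below -/
import Mathlib

section
/- Let Φ : ℝⁿ → ℝ be convex and differentiable on ℝⁿ, let S = {x⁽¹⁾, …, x⁽ᴷ⁾} ⊆ ℝⁿ be a finite set, and let d ∈ ℝⁿ be such that ∇Φ(x⁽ⁱ⁾) = d for every i = 1, …, K. Then ∇Φ(x) = d for every x in the convex hull of S. -/
open InnerProductSpace

/-- The function `z ↦ ⟪d, z⟫` is affine, hence concave. -/
private lemma concave_inner {E : Type*} [NormedAddCommGroup E] [InnerProductSpace ℝ E]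
    (d : E) : ConcaveOn ℝ Set.univ (fun z : E => (inner ℝ d z : ℝ)) := by
  refine ⟨convex_univ, fun a _ b _ s t hs ht hst => le_of_eq ?_⟩
  simp [inner_add_right, real_inner_smul_right, smul_eq_mul]

/-- A convex differentiable function with zero gradient at `a` has a global minimum at `a`. -/
private lemma min_of_grad_zero {E : Type*} [NormedAddCommGroup E] [InnerProductSpace ℝ E]
    [CompleteSpace E] {ψ : E → ℝ} (hψ : ConvexOn ℝ Set.univ ψ) {a : E}
    (ha : HasGradientAt ψ 0 a) : ∀ z, ψ a ≤ ψ z := by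
  intro z
  set g : ℝ → ℝ := fun t => ψ (a + t • (z - a)) with hg
  have hgconv : ConvexOn ℝ Set.univ g := by
    have := hψ.comp_affineMap (AffineMap.lineMap a z)
    simp only [Set.preimage_univ] at this
    convert this using 1
    iterate 4 rfl
    funext t
    simp only [hg, Function.comp, AffineMap.lineMap_apply_module]
    congr 1
    module
  have hline : HasDerivAt (fun t : ℝ => a + t • (z - a)) (z - a) (0 : ℝ) := by
    simpa using ((hasDerivAt_id (0:ℝ)).smul_const (z - a)).const_add a
  have hF : HasFDerivAt ψ (toDual ℝ E (0 : E)) a := hasGradientAt_iff_hasFDerivAt.mp ha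
  have hF' : HasFDerivAt ψ (toDual ℝ E (0 : E)) ((fun t : ℝ => a + t • (z - a)) 0) := by
    simpa using hF
  have hga : HasDerivAt g (toDual ℝ E (0 : E) (z - a)) 0 := hF'.comp_hasDerivAt 0 hline
  have hga0 : HasDerivAt g 0 0 := by simpa using hga
  have hslope := hgconv.le_slope_of_hasDerivAt (x := (0:ℝ)) (y := 1)
    (Set.mem_univ _) (Set.mem_univ _) one_pos hga0
  have h0 : g 0 = ψ a := by simp [hg]
  have h1 : g 1 = ψ z := by simp [hg]
  rw [slope_def_field] at hslope
  simp [h0, h1, div_one] at hslope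
  linarith [hslope]

/-- **A convex function with constant gradient on a finite set has the same
gradient on its convex hull.**  If `Φ : ℝⁿ → ℝ` is convex and differentiable
and `∇Φ (x i) = d` for each of finitely many points `x 1, …, x K`, then
`∇Φ y = d` for every `y` in the convex hull of `{x 1, …, x K}`. -/
theorem gradient_const_on_convexHull {n K : ℕ}
    (Φ : EuclideanSpace ℝ (Fin n) → ℝ)
    (hΦ : ConvexOn ℝ Set.univ Φ) (hdiff : Differentiable ℝ Φ)
    (x : Fin K → EuclideanSpace ℝ (Fin n)) (d : EuclideanSpace ℝ (Fin n))
    (hgrad : ∀ i, gradient Φ (x i) = d) :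
    ∀ y ∈ convexHull ℝ (Set.range x), gradient Φ y = d := by
  set ψ : EuclideanSpace ℝ (Fin n) → ℝ := fun z => Φ z - inner ℝ d z with hψdef
  have hψconv : ConvexOn ℝ Set.univ ψ := by
    have := hΦ.sub (concave_inner d)
    simpa [hψdef, Pi.sub_def] using this
  -- gradient of ψ
  have hψgrad : ∀ w : EuclideanSpace ℝ (Fin n), HasGradientAt ψ (gradient Φ w - d) w := by
    intro w
    have h1 : HasFDerivAt Φ (toDual ℝ _ (gradient Φ w)) w :=
      hasGradientAt_iff_hasFDerivAt.mp (hdiff w).hasGradientAt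
    have heq : (toDual ℝ (EuclideanSpace ℝ (Fin n)) d) = innerSL ℝ d := by
      ext z; simp [toDual_apply_apply]
    have h2 : HasFDerivAt (fun z : EuclideanSpace ℝ (Fin n) => (inner ℝ d z : ℝ))
        (toDual ℝ _ d) w := by
      rw [heq]; exact (innerSL ℝ d).hasFDerivAt
    have := h1.sub h2
    rw [← map_sub] at this
    exact hasGradientAt_iff_hasFDerivAt.mpr this
  have hψ0 : ∀ i, HasGradientAt ψ 0 (x i) := by
    intro i
    have := hψgrad (x i)
    rwa [hgrad i, sub_self] at this
  have hmin : ∀ i, ∀ z, ψ (x i) ≤ ψ z := fun i => min_of_grad_zero hψconv (hψ0 i)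
  intro y hy
  -- maximum principle: ψ y ≤ ψ (x i) for some i
  obtain ⟨w, hw, hwy⟩ := hψconv.exists_ge_of_mem_convexHull
    (Set.subset_univ _) hy
  obtain ⟨i, rfl⟩ := hw
  -- hence y is a global min of ψ
  have hymin : ∀ z, ψ y ≤ ψ z := fun z => le_trans hwy (hmin i z)
  have hloc : IsLocalMin ψ y := Filter.Eventually.of_forall hymin
  have hzero : gradient Φ y - d = 0 := by
    have hF : HasFDerivAt ψ (toDual ℝ _ (gradient Φ y - d)) y :=
      hasGradientAt_iff_hasFDerivAt.mp (hψgrad y)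
    have h := hloc.hasFDerivAt_eq_zero hF
    have h0 : toDual ℝ (EuclideanSpace ℝ (Fin n)) (gradient Φ y - d) = toDual ℝ _ 0 := by
      simpa using h
    simpa using (toDual ℝ (EuclideanSpace ℝ (Fin n))).injective h0
  exact sub_eq_zero.mp hzero
end

section
/- Let V, Φ_G, Φ_H : ℝⁿ → ℝ be convex and differentiable on ℝⁿ, let A = {a⁽¹⁾, …, a⁽ᴷ⁾} ⊆ ℝⁿ be a finite set, and let d ∈ ℝⁿ be such that ∇V(a) = d for every a ∈ A. Define G := ∇Φ_G and H := ∇Φ_H, and suppose G(a) = H(a) = ∇V(a) for every a ∈ A. Let T : ℝⁿ → ℝ satisfy 0 ≤ T(x) ≤ 1 for all x, and define Z(x) := T(x)·G(x) + (1 − T(x))·H(x). Then for every x in the convex hull of A, ∇V(x) = G(x) = H(x) = Z(x) = d. -/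
open InnerProductSpace

/-- First-order optimality: a convex differentiable function with vanishing
derivative at `x` attains its global minimum at `x`. -/
lemma aux_convex_min {E : Type*} [NormedAddCommGroup E] [InnerProductSpace ℝ E]
    {f : E → ℝ} (hc : ConvexOn ℝ Set.univ f) (hd : Differentiable ℝ f)
    {x : E} (hx : fderiv ℝ f x = 0) (y : E) : f x ≤ f y := by
  set v := y - x with hv
  set g : ℝ → ℝ := fun t => f (x + t • v) with hgdef
  have h1 : HasDerivAt (fun t : ℝ => x + t • v) v 0 := by
    simpa using ((hasDerivAt_id (0:ℝ)).smul_const v).const_add x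
  have hg : HasDerivAt g 0 0 := by
    have := (hd (x + (0:ℝ) • v)).hasFDerivAt.comp_hasDerivAt 0 h1
    simp only [zero_smul, add_zero, hx, ContinuousLinearMap.zero_apply] at this
    exact this
  have htend : Filter.Tendsto (slope g 0) (nhdsWithin 0 (Set.Ioi 0)) (nhds 0) :=
    (hasDerivAt_iff_tendsto_slope.mp hg).mono_left
      (nhdsWithin_mono 0 (fun t ht => ne_of_gt ht))
  have hbound : ∀ᶠ t in nhdsWithin (0:ℝ) (Set.Ioi 0), slope g 0 t ≤ f y - f x := by
    filter_upwards [Ioo_mem_nhdsGT_of_mem (Set.left_mem_Ico.2 one_pos)] with t ht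
    have ht0 : 0 < t := ht.1
    have ht1 : t < 1 := ht.2
    have hcomb : g t ≤ (1 - t) * f x + t * f y := by
      have := hc.2 (Set.mem_univ x) (Set.mem_univ y)
        (by linarith : (0:ℝ) ≤ 1 - t) ht0.le (by ring)
      have hpt : (1 - t) • x + t • y = x + t • v := by
        simp [hv, smul_sub, sub_smul]; abel
      simpa [hpt, smul_eq_mul] using this
    have hg0 : g 0 = f x := by simp [hgdef]
    rw [slope_def_field, sub_zero, div_le_iff₀ ht0]
    calc g t - g 0 ≤ (1 - t) * f x + t * f y - f x := by rw [hg0]; linarith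
      _ = (f y - f x) * t := by ring
  have : (0:ℝ) ≤ f y - f x := le_of_tendsto htend hbound
  linarith

/-- If a convex differentiable function has gradient `d` at every point of a
family, then it has gradient `d` on the convex hull of the family's range. -/
lemma aux_grad_hull {E : Type*} [NormedAddCommGroup E] [InnerProductSpace ℝ E]
    [CompleteSpace E] {W : E → ℝ} (hc : ConvexOn ℝ Set.univ W) (hd : Differentiable ℝ W)
    {ι : Type*} {a : ι → E} {d : E} (hg : ∀ i, gradient W (a i) = d) :
    ∀ y ∈ convexHull ℝ (Set.range a), gradient W y = d := by
  set f : E → ℝ := fun x => W x - inner ℝ d x with hfdef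
  have hinner : ∀ x : E, HasFDerivAt (fun z : E => (inner ℝ d z : ℝ)) (innerSL ℝ d) x :=
    fun x => (innerSL ℝ d).hasFDerivAt
  have hfderiv : ∀ x : E, fderiv ℝ f x = toDual ℝ E (gradient W x - d) := by
    intro x
    have h1 : HasFDerivAt f (fderiv ℝ W x - innerSL ℝ d) x :=
      (hd x).hasFDerivAt.sub (hinner x)
    rw [h1.fderiv]
    have h2 : toDual ℝ E d = innerSL ℝ d := by
      ext z; simp [toDual_apply_apply]
    have h3 : toDual ℝ E (gradient W x) = fderiv ℝ W x := by
      rw [gradient]; exact (toDual ℝ E).apply_symm_apply _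
    rw [map_sub, h2, h3]
  have hfd : Differentiable ℝ f := fun x => (hd x).sub (hinner x).differentiableAt
  have hfc : ConvexOn ℝ Set.univ f := by
    exact hc.sub (((innerSL ℝ d).toLinearMap.concaveOn convex_univ).congr (by simp))
  -- each a i is a global minimizer of f
  have hmin : ∀ i, ∀ z, f (a i) ≤ f z := by
    intro i z
    refine aux_convex_min hfc hfd ?_ z
    rw [hfderiv, hg i, sub_self, map_zero]
  -- the set of global minimizers is convex and contains the range
  set S : Set E := {x | ∀ z, f x ≤ f z} with hSdef
  have hSconv : Convex ℝ S := by
    intro x hx y hy s t hs ht hst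
    intro z
    have h1 := hx z; have h2 := hy z
    have := hfc.2 (Set.mem_univ x) (Set.mem_univ y) hs ht hst
    calc f (s • x + t • y) ≤ s * f x + t * f y := by simpa [smul_eq_mul] using this
      _ ≤ s * f z + t * f z := by
          gcongr <;> first | exact h1 | exact h2
      _ = f z := by rw [← add_mul, hst, one_mul]
  have hSsub : convexHull ℝ (Set.range a) ⊆ S := by
    refine convexHull_min ?_ hSconv
    rintro _ ⟨i, rfl⟩; exact hmin i
  intro y hy
  have hylocal : IsLocalMin f y := Filter.Eventually.of_forall fun z => hSsub hy z
  have hzero : fderiv ℝ f y = 0 := hylocal.fderiv_eq_zero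
  rw [hfderiv y] at hzero
  have h0 : gradient W y - d = 0 := (toDual ℝ E).injective (hzero.trans (map_zero _).symm)
  exact sub_eq_zero.mp h0

/-- **Generalization of the mixture-of-gradient-experts model.**
`V, Φ_G, Φ_H : ℝⁿ → ℝ` convex differentiable; `∇V = d` at each of the points
`a 1, …, a K`; the expert maps `G = ∇Φ_G` and `H = ∇Φ_H` agree with `∇V` at
each `a i`; `T` is a gating function with values in `[0,1]`, and
`Z = T·G + (1 − T)·H` the gated mixture.  Then on the convex hull of the
points, `∇V = G = H = Z = d`. -/
theorem moge_generalization {n K : ℕ}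
    (V ΦG ΦH : EuclideanSpace ℝ (Fin n) → ℝ)
    (hVc : ConvexOn ℝ Set.univ V) (hVd : Differentiable ℝ V)
    (hGc : ConvexOn ℝ Set.univ ΦG) (hGd : Differentiable ℝ ΦG)
    (hHc : ConvexOn ℝ Set.univ ΦH) (hHd : Differentiable ℝ ΦH)
    (a : Fin K → EuclideanSpace ℝ (Fin n)) (d : EuclideanSpace ℝ (Fin n))
    (hgradV : ∀ i, gradient V (a i) = d)
    (G H : EuclideanSpace ℝ (Fin n) → EuclideanSpace ℝ (Fin n))
    (hGdef : ∀ y, G y = gradient ΦG y) (hHdef : ∀ y, H y = gradient ΦH y)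
    (hagree : ∀ i, G (a i) = gradient V (a i) ∧ H (a i) = gradient V (a i))
    (T : EuclideanSpace ℝ (Fin n) → ℝ) (hT : ∀ y, T y ∈ Set.Icc (0 : ℝ) 1)
    (Z : EuclideanSpace ℝ (Fin n) → EuclideanSpace ℝ (Fin n))
    (hZ : ∀ y, Z y = T y • G y + (1 - T y) • H y) :
    ∀ y ∈ convexHull ℝ (Set.range a),
      gradient V y = d ∧ G y = d ∧ H y = d ∧ Z y = d := by
  have hGgrad : ∀ i, gradient ΦG (a i) = d := by
    intro i; rw [← hGdef, (hagree i).1, hgradV]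
  have hHgrad : ∀ i, gradient ΦH (a i) = d := by
    intro i; rw [← hHdef, (hagree i).2, hgradV]
  intro y hy
  have h1 := aux_grad_hull hVc hVd hgradV y hy
  have h2 := aux_grad_hull hGc hGd hGgrad y hy
  have h3 := aux_grad_hull hHc hHd hHgrad y hy
  refine ⟨h1, ?_, ?_, ?_⟩
  · rw [hGdef, h2]
  · rw [hHdef, h3]
  · rw [hZ, hGdef, hHdef, h2, h3, ← add_smul]
    simp
end

section
/- Let L ∈ ℕ, let F, A₀ be finite subsets of {1, …, L}, and set p := |F \ A₀|. Let Viol be a map from subsets of {1, …, L} to subsets of {1, …, L} satisfying: (i) Viol(A) ⊆ F \ A for every A, and (ii) Viol(A) ≠ ∅ whenever F ⊄ A. Define the iteration A(0) := A₀ and A(k+1) := A(k) ∪ Viol(A(k)) for k ≥ 0. Then there exists k ≤ p with Viol(A(k)) = ∅; i.e., the do-while loop of the constraint-screening algorithm terminates after at most p + 1 iterations, where p is the number of false-negative constraints. -/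
/-- **Termination of the constraint-screening do-while loop.**
`F` is the set of binding constraints, `A₀` the initially predicted binding
set, `p = |F \ A₀|` the number of false negatives.  The violation oracle
satisfies `Viol A ⊆ F \ A` and returns a nonempty set whenever `F ⊄ A`.  The
iteration `A (k+1) = A k ∪ Viol (A k)` starting from `A 0 = A₀` reaches a step
`k ≤ p` with `Viol (A k) = ∅`, i.e. the loop terminates after at most `p + 1`
iterations. -/
theorem screening_loop_terminates {L : ℕ}
    (F A₀ : Finset (Fin L)) (p : ℕ) (hp : p = (F \ A₀).card)
    (Viol : Finset (Fin L) → Finset (Fin L))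
    (hsub : ∀ A, Viol A ⊆ F \ A)
    (hne : ∀ A, ¬ F ⊆ A → (Viol A).Nonempty)
    (Aseq : ℕ → Finset (Fin L)) (h0 : Aseq 0 = A₀)
    (hsucc : ∀ k, Aseq (k + 1) = Aseq k ∪ Viol (Aseq k)) :
    ∃ k ≤ p, Viol (Aseq k) = ∅ := by
  by_contra h
  push_neg at h
  have hNE : ∀ k ≤ p, (Viol (Aseq k)).Nonempty := fun k hk =>
    h k hk
  -- key invariant
  have key : ∀ k ≤ p, (F \ Aseq k).card + k ≤ p := by
    intro k
    induction k with
    | zero => intro _; simp [h0, hp]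
    | succ n ih =>
      intro hn
      have hn' : n ≤ p := Nat.le_of_succ_le hn
      have hV := hNE n hn'
      have hdec : (F \ Aseq (n + 1)).card < (F \ Aseq n).card := by
        apply Finset.card_lt_card
        constructor
        · intro x hx
          rw [Finset.mem_sdiff] at hx ⊢
          rw [hsucc n, Finset.mem_union] at hx
          exact ⟨hx.1, fun hxA => hx.2 (Or.inl hxA)⟩
        · intro hcon
          obtain ⟨v, hv⟩ := hV
          have hvF : v ∈ F \ Aseq n := hsub _ hv
          have := hcon hvF
          rw [Finset.mem_sdiff, hsucc n, Finset.mem_union] at this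
          exact this.2 (Or.inr hv)
      have := ih hn'
      omega
  have hlast := key p le_rfl
  have hcard0 : (F \ Aseq p).card = 0 := by omega
  have hsubF : F ⊆ Aseq p := by
    rw [Finset.card_eq_zero, Finset.sdiff_eq_empty_iff_subset] at hcard0
    exact hcard0
  have : Viol (Aseq p) = ∅ := by
    have := hsub (Aseq p)
    rw [Finset.sdiff_eq_empty_iff_subset.2 hsubF] at this
    exact Finset.subset_empty.1 this
  exact Finset.nonempty_iff_ne_empty.1 (h p le_rfl) this
end
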